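/- The expected waiting time until an i.i.d. uniform ternary sequence becomes a superpattern for [3]^3 equals 217/16 = 13.5625; that is, ∑_{n=7}^{∞} n·(6/3^n)·∑_{m=7}^{n} ((m−4)^2 − 2)·C(n−2, m−2) = 217/16. -/

import Mathlib

open Finset

lemma t0 (N : ℕ) : ∑ j ∈ range (N+1), (N.choose j : ℝ) = 2 ^ N := by
  rw [← Nat.cast_sum, Nat.sum_range_choose]; push_cast; ring

lemma t1 (N : ℕ) : ∑ j ∈ range (N+1), (j : ℝ) * (N.choose j : ℝ) = N * 2 ^ N / 2 := by
  induction N with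
  | zero => simp
  | succ N ih =>
    rw [Finset.sum_range_succ']
    have h1 : ∀ j ∈ range (N+1), ((j+1 : ℕ) : ℝ) * ((N+1).choose (j+1) : ℝ)
        = ((j:ℝ) * (N.choose j : ℝ) + (N.choose j : ℝ)) + ((j:ℝ)+1) * (N.choose (j+1) : ℝ) := by
      intro j _
      rw [Nat.choose_succ_succ]
      push_cast
      ring
    rw [Finset.sum_congr rfl h1, Finset.sum_add_distrib, Finset.sum_add_distrib]
    have h2 : ∑ j ∈ range (N+1), ((j:ℝ)+1) * (N.choose (j+1) : ℝ)
        = ∑ j ∈ range (N+1), (j : ℝ) * (N.choose j : ℝ) := by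
      rw [Finset.sum_range_succ (fun j => ((j:ℝ)+1) * (N.choose (j+1) : ℝ)) N,
        Finset.sum_range_succ' (fun j => (j : ℝ) * (N.choose j : ℝ)) N]
      simp [Nat.choose_succ_self]
    rw [h2, ih, t0]
    push_cast
    ring

lemma t2 (N : ℕ) : ∑ j ∈ range (N+1), (j : ℝ)^2 * (N.choose j : ℝ) = N * (N+1) * 2 ^ N / 4 := by
  induction N with
  | zero => simp
  | succ N ih =>
    rw [Finset.sum_range_succ']
    have h1 : ∀ j ∈ range (N+1), ((j+1 : ℕ) : ℝ)^2 * ((N+1).choose (j+1) : ℝ)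
        = ((j:ℝ)^2 * (N.choose j : ℝ) + 2 * ((j:ℝ) * (N.choose j : ℝ)) + (N.choose j : ℝ))
          + ((j:ℝ)+1)^2 * (N.choose (j+1) : ℝ) := by
      intro j _
      rw [Nat.choose_succ_succ]
      push_cast
      ring
    rw [Finset.sum_congr rfl h1, Finset.sum_add_distrib, Finset.sum_add_distrib,
      Finset.sum_add_distrib, ← Finset.mul_sum]
    have h2 : ∑ j ∈ range (N+1), ((j:ℝ)+1)^2 * (N.choose (j+1) : ℝ)
        = ∑ j ∈ range (N+1), (j : ℝ)^2 * (N.choose j : ℝ) := by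
      rw [Finset.sum_range_succ (fun j => ((j:ℝ)+1)^2 * (N.choose (j+1) : ℝ)) N,
        Finset.sum_range_succ' (fun j => (j : ℝ)^2 * (N.choose j : ℝ)) N]
      simp [Nat.choose_succ_self]
    rw [h2, ih, t1, t0]
    push_cast
    ring

lemma t3 (N : ℕ) : ∑ j ∈ range (N+1), ((j:ℝ)^2 - 4*j + 2) * (N.choose j : ℝ)
    = 2 ^ N * ((N:ℝ)^2 - 7*N + 8) / 4 := by
  have h : ∀ j ∈ range (N+1), ((j:ℝ)^2 - 4*j + 2) * (N.choose j : ℝ)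
      = (j:ℝ)^2 * (N.choose j : ℝ) - 4 * ((j:ℝ) * (N.choose j : ℝ)) + 2 * (N.choose j : ℝ) := by
    intro j _; ring
  rw [Finset.sum_congr rfl h, Finset.sum_add_distrib, Finset.sum_sub_distrib,
    ← Finset.mul_sum, ← Finset.mul_sum, t0, t1, t2]
  ring

lemma c2 (N : ℕ) : 2 * (N.choose 2 : ℝ) = (N:ℝ)^2 - N := by
  induction N with
  | zero => simp
  | succ N ih => rw [Nat.choose_succ_succ, Nat.choose_one_right]; push_cast; push_cast at ih; nlinarith [ih]

lemma c3 (N : ℕ) : 6 * (N.choose 3 : ℝ) = (N:ℝ)^3 - 3*(N:ℝ)^2 + 2*N := by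
  induction N with
  | zero => simp
  | succ N ih =>
    rw [Nat.choose_succ_succ]
    have := c2 N
    push_cast
    push_cast at ih this
    nlinarith [ih, this]

lemma c4 (N : ℕ) : 24 * (N.choose 4 : ℝ) = (N:ℝ)^4 - 6*(N:ℝ)^3 + 11*(N:ℝ)^2 - 6*N := by
  induction N with
  | zero => simp
  | succ N ih =>
    rw [Nat.choose_succ_succ]
    have := c3 N
    push_cast
    push_cast at ih this
    nlinarith [ih, this]

lemma superPatternInnerSum (N : ℕ) (hN : 5 ≤ N) :
    12 * ∑ m ∈ Finset.Icc 7 (N+2), (((m:ℝ)-4)^2 - 2) * (N.choose (m-2) : ℝ)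
    = 3 * 2^N * ((N:ℝ)^2 - 7*N + 8)
      - ((N:ℝ)^4 - 8*(N:ℝ)^3 + 5*(N:ℝ)^2 - 10*N + 24) := by
  have h1 : ∑ m ∈ Finset.Icc 7 (N+2), (((m:ℝ)-4)^2 - 2) * (N.choose (m-2) : ℝ)
      = ∑ j ∈ Finset.Icc 5 N, (((j:ℝ)-2)^2 - 2) * (N.choose j : ℝ) := by
    rw [show (7:ℕ) = 5 + 2 from rfl, ← Finset.map_add_right_Icc, Finset.sum_map]
    apply Finset.sum_congr rfl
    intro j _
    have hj : j + 2 - 2 = j := by omega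
    simp only [addRightEmbedding_apply, hj]
    push_cast
    ring
  have h2 : (∑ j ∈ Finset.Icc 5 N, (((j:ℝ)-2)^2 - 2) * (N.choose j : ℝ))
      = (∑ j ∈ range (N+1), (((j:ℝ)-2)^2 - 2) * (N.choose j : ℝ))
        - ∑ j ∈ range 5, (((j:ℝ)-2)^2 - 2) * (N.choose j : ℝ) := by
    rw [← Finset.Ico_add_one_right_eq_Icc, Finset.range_eq_Ico,
      ← Finset.sum_Ico_consecutive (fun j => (((j:ℝ)-2)^2 - 2) * (N.choose j : ℝ))
        (by omega : (0:ℕ) ≤ 5) (by omega : 5 ≤ N+1)]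
    rw [Finset.range_eq_Ico]
    ring
  have h3 : (∑ j ∈ range (N+1), (((j:ℝ)-2)^2 - 2) * (N.choose j : ℝ))
      = 2 ^ N * ((N:ℝ)^2 - 7*N + 8) / 4 := by
    rw [← t3 N]
    apply Finset.sum_congr rfl
    intro j _
    ring
  have h4 : (∑ j ∈ range 5, (((j:ℝ)-2)^2 - 2) * (N.choose j : ℝ))
      = 2 - (N:ℝ) - 2*(N.choose 2 : ℝ) - (N.choose 3 : ℝ) + 2*(N.choose 4 : ℝ) := by
    simp [Finset.sum_range_succ, Nat.choose_one_right]
    ring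
  rw [h1, h2, h3, h4]
  linear_combination 12 * c2 N + 2 * c3 N - c4 N

open Filter Topology

noncomputable def spG : ℕ → ℝ := fun n =>
  if n < 7 then 217/16 else
    ((2:ℝ)^n * (288 + 216*(n:ℝ) - 90*(n:ℝ)^2 + 18*(n:ℝ)^3)
      + (-135 - 1092*(n:ℝ) + 1332*(n:ℝ)^2 - 660*(n:ℝ)^3 + 162*(n:ℝ)^4 - 12*(n:ℝ)^5))
      / (16 * 3^n)

lemma spG_tele (n : ℕ) :
    (if 7 ≤ n then
        (n : ℝ) * ((6 / 3 ^ n : ℝ) *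
          ∑ m ∈ Finset.Icc 7 n, (((m : ℝ) - 4) ^ 2 - 2) * (Nat.choose (n - 2) (m - 2) : ℝ))
      else 0) = spG n - spG (n+1) := by
  rcases lt_or_ge n 6 with h | h
  · rw [if_neg (by omega), spG, spG, if_pos (by omega), if_pos (by omega)]
    ring
  rcases Nat.eq_or_lt_of_le h with h6 | h7
  · rw [if_neg (by omega), spG, spG, ← h6, if_pos (by omega), if_neg (by omega)]
    norm_num
  · obtain ⟨k, rfl⟩ : ∃ k, n = k + 7 := ⟨n - 7, by omega⟩
    rw [if_pos (by omega), spG, spG, if_neg (by omega), if_neg (by omega)]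
    have hc : k + 7 - 2 = k + 5 := by omega
    rw [hc]
    have hS : ∑ m ∈ Finset.Icc 7 (k+7), (((m : ℝ) - 4) ^ 2 - 2) * ((k+5).choose (m-2) : ℝ)
        = (3 * 2^(k+5) * (((k:ℝ)+5)^2 - 7*((k:ℝ)+5) + 8)
          - (((k:ℝ)+5)^4 - 8*((k:ℝ)+5)^3 + 5*((k:ℝ)+5)^2 - 10*((k:ℝ)+5) + 24)) / 12 := by
      have hs := superPatternInnerSum (k+5) (by omega)
      have he : k + 5 + 2 = k + 7 := by omega
      rw [he] at hs
      push_cast at hs ⊢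
      linarith [hs]
    rw [hS]
    have p2 : (2:ℝ)^(k+5) = 32 * 2^k := by rw [pow_add]; ring
    have p2a : (2:ℝ)^(k+7) = 128 * 2^k := by rw [pow_add]; ring
    have p2b : (2:ℝ)^(k+7+1) = 256 * 2^k := by rw [pow_add]; ring
    have p3 : (3:ℝ)^(k+7) = 2187 * 3^k := by rw [pow_add]; ring
    have p3b : (3:ℝ)^(k+7+1) = 6561 * 3^k := by rw [pow_add]; ring
    rw [p2, p2a, p2b, p3, p3b]
    have h3 : (3:ℝ)^k ≠ 0 := by positivity
    push_cast
    field_simp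
    ring

lemma spG_tendsto : Tendsto spG atTop (𝓝 0) := by
  have T : ∀ (r:ℝ), |r| < 1 → ∀ k : ℕ, Tendsto (fun n : ℕ => (n:ℝ)^k * r^n) atTop (𝓝 0) :=
    fun r hr k => tendsto_pow_const_mul_const_pow_of_abs_lt_one k hr
  have h23 : |(2:ℝ)/3| < 1 := by rw [abs_of_nonneg] <;> norm_num
  have h13 : |(1:ℝ)/3| < 1 := by rw [abs_of_nonneg] <;> norm_num
  have big := (((((((((((T (2/3) h23 0).const_mul (288:ℝ)).add
    ((T (2/3) h23 1).const_mul (216:ℝ))).sub ((T (2/3) h23 2).const_mul (90:ℝ))).add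
    ((T (2/3) h23 3).const_mul (18:ℝ))).sub ((T (1/3) h13 0).const_mul (135:ℝ))).sub
    ((T (1/3) h13 1).const_mul (1092:ℝ))).add ((T (1/3) h13 2).const_mul (1332:ℝ))).sub
    ((T (1/3) h13 3).const_mul (660:ℝ))).add ((T (1/3) h13 4).const_mul (162:ℝ))).sub
    ((T (1/3) h13 5).const_mul (12:ℝ))).div_const (16:ℝ)
  have big' : Tendsto (fun n : ℕ =>
      (288*((n:ℝ)^0*(2/3)^n) + 216*((n:ℝ)^1*(2/3)^n) - 90*((n:ℝ)^2*(2/3)^n)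
        + 18*((n:ℝ)^3*(2/3)^n) - 135*((n:ℝ)^0*(1/3)^n) - 1092*((n:ℝ)^1*(1/3)^n)
        + 1332*((n:ℝ)^2*(1/3)^n) - 660*((n:ℝ)^3*(1/3)^n) + 162*((n:ℝ)^4*(1/3)^n)
        - 12*((n:ℝ)^5*(1/3)^n)) / 16) atTop (𝓝 0) := by
    simpa using big
  apply big'.congr'
  filter_upwards [eventually_ge_atTop 7] with n hn
  rw [spG, if_neg (by omega)]
  have h3 : (3:ℝ)^n ≠ 0 := by positivity
  have e2 : ((2:ℝ)/3)^n = 2^n / 3^n := div_pow 2 3 n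
  have e1 : ((1:ℝ)/3)^n = 1 / 3^n := by rw [div_pow, one_pow]
  rw [e2, e1]
  field_simp
  ring

/-- The expected waiting time until an i.i.d. uniform ternary sequence becomes a
superpattern for `[3]^3` equals `217/16 = 13.5625`. -/
theorem superpattern_waiting_time_expectation :
    ∑' n : ℕ,
      (if 7 ≤ n then
        (n : ℝ) * ((6 / 3 ^ n : ℝ) *
          ∑ m ∈ Finset.Icc 7 n, (((m : ℝ) - 4) ^ 2 - 2) * (Nat.choose (n - 2) (m - 2) : ℝ))
      else 0) = 217 / 16 := by
  set F : ℕ → ℝ := fun n =>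
    (if 7 ≤ n then
        (n : ℝ) * ((6 / 3 ^ n : ℝ) *
          ∑ m ∈ Finset.Icc 7 n, (((m : ℝ) - 4) ^ 2 - 2) * (Nat.choose (n - 2) (m - 2) : ℝ))
      else 0) with hF
  have hnn : ∀ i, 0 ≤ F i := by
    intro i
    rw [hF]
    dsimp only
    split
    · apply mul_nonneg (Nat.cast_nonneg i)
      apply mul_nonneg (by positivity)
      apply Finset.sum_nonneg
      intro m hm
      have h7 : (7:ℝ) ≤ (m:ℝ) := by exact_mod_cast (Finset.mem_Icc.mp hm).1
      apply mul_nonneg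
      · nlinarith [h7]
      · positivity
    · exact le_refl 0
  have key : HasSum F (217/16) := by
    rw [hasSum_iff_tendsto_nat_of_nonneg hnn]
    have hps : ∀ n, ∑ i ∈ Finset.range n, F i = spG 0 - spG n := by
      intro n
      rw [← Finset.sum_range_sub' spG n]
      exact Finset.sum_congr rfl (fun i _ => spG_tele i)
    simp only [hps]
    have : Tendsto (fun n => spG 0 - spG n) atTop (𝓝 (spG 0 - 0)) :=
      tendsto_const_nhds.sub spG_tendsto
    have h0 : spG 0 = 217/16 := by rw [spG, if_pos (by omega)]
    rw [h0, sub_zero] at this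
    exact this
  exact key.tsum_eq
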